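/- Let F, Z, K₁, K₂, S₁, S₂ be positive integers with Z < F. If a (K₁,F,Z,S₁)-PDA exists and a (K₂,F,Z,S₂)-PDA exists, then a (K₁+K₂, F, Z, S₁+S₂)-PDA exists. Consequently K_{(F,F−Z,S₁+S₂)} ≥ K_{(F,F−Z,S₁)} + K_{(F,F−Z,S₂)}. -/

import Mathlib

/-- A `(K, F, Z, S)` placement delivery array: an `F × K` array over
`{0, …, S-1} ∪ {*}` (with `none` playing the role of `*`) such that
(1) each integer occurs at most once in each row and in each column,
(2) whenever two distinct cells `(a, b)` and `(c, d)` contain the same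
integer, the opposite corners `(a, d)` and `(c, b)` contain `*`, and
(3) the symbol `*` occurs exactly `Z` times in each column. -/
def IsPDA (K F Z S : ℕ) (P : Fin F → Fin K → Option (Fin S)) : Prop :=
  (∀ (i : Fin F) (j j' : Fin K) (s : Fin S), P i j = some s → P i j' = some s → j = j') ∧
  (∀ (i i' : Fin F) (j : Fin K) (s : Fin S), P i j = some s → P i' j = some s → i = i') ∧
  (∀ (a c : Fin F) (b d : Fin K) (s : Fin S),
      (a, b) ≠ (c, d) → P a b = some s → P c d = some s →
      P a d = none ∧ P c b = none) ∧
  (∀ j : Fin K, (Finset.univ.filter (fun i => P i j = none)).card = Z)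

/-- There exists a `(K, F, Z, S)` placement delivery array. -/
def PDAExists (K F Z S : ℕ) : Prop :=
  ∃ P : Fin F → Fin K → Option (Fin S), IsPDA K F Z S P

/-- `maxK F Z S` is the largest `K` such that a `(K, F, Z, S)`-PDA exists
(the quantity `K_{(F, F-Z, S)}` of the paper). -/
noncomputable def maxK (F Z S : ℕ) : ℕ := sSup {K : ℕ | PDAExists K F Z S}

lemma pda_bound {K F Z S : ℕ} (hZF : Z < F) (h : PDAExists K F Z S) : K ≤ F * S := by
  obtain ⟨P, h1, h2, h3, h4⟩ := h
  have hex : ∀ j : Fin K, ∃ i : Fin F, ∃ s : Fin S, P i j = some s := by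
    intro j
    by_contra hc
    push_neg at hc
    have hall : ∀ i, P i j = none := by
      intro i
      cases hpi : P i j with
      | none => rfl
      | some s => exact absurd hpi (hc i s)
    have hc2 := h4 j
    simp [hall] at hc2
    omega
  choose f g hfg using hex
  have hinj : Function.Injective (fun j => (f j, g j)) := by
    intro j j' he
    simp only [Prod.mk.injEq] at he
    obtain ⟨he1, he2⟩ := he
    apply h1 (f j) j j' (g j) (hfg j)
    rw [he1, he2]
    exact hfg j'
  have := Fintype.card_le_of_injective _ hinj
  simpa using this

lemma pda_concat {F Z A B S₁ S₂ : ℕ} (hA : PDAExists A F Z S₁) (hB : PDAExists B F Z S₂) :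
    PDAExists (A + B) F Z (S₁ + S₂) := by
  obtain ⟨P, P1, P2, P3, P4⟩ := hA
  obtain ⟨Q, Q1, Q2, Q3, Q4⟩ := hB
  refine ⟨fun i j => if h : (j : ℕ) < A then (P i ⟨j, h⟩).map (Fin.castAdd S₂)
    else (Q i ⟨(j : ℕ) - A, by have := j.isLt; omega⟩).map (Fin.natAdd S₁), ?_, ?_, ?_, ?_⟩
  · intro i j j' s hj hj'
    by_cases hb : (j : ℕ) < A <;> by_cases hd : (j' : ℕ) < A <;>
      simp only [hb, hd, dite_true, dite_false, dif_pos, dif_neg, not_false_iff,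
        Option.map_eq_some_iff] at hj hj'
    · obtain ⟨t, ht, hts⟩ := hj
      obtain ⟨t', ht', hts'⟩ := hj'
      have htt : t = t' := by
        have e1 : (t : ℕ) = (s : ℕ) := by rw [← hts]; simp
        have e2 : (t' : ℕ) = (s : ℕ) := by rw [← hts']; simp
        exact Fin.ext (by omega)
      have := P1 i ⟨j, hb⟩ ⟨j', hd⟩ t ht (htt ▸ ht')
      simp only [Fin.mk.injEq] at this
      exact Fin.ext this
    · obtain ⟨t, ht, hts⟩ := hj
      obtain ⟨u, hu, hus⟩ := hj'
      have e1 : (t : ℕ) = (s : ℕ) := by rw [← hts]; simp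
      have e2 : S₁ + (u : ℕ) = (s : ℕ) := by rw [← hus]; simp
      have := t.isLt
      omega
    · obtain ⟨u, hu, hus⟩ := hj
      obtain ⟨t, ht, hts⟩ := hj'
      have e1 : (t : ℕ) = (s : ℕ) := by rw [← hts]; simp
      have e2 : S₁ + (u : ℕ) = (s : ℕ) := by rw [← hus]; simp
      have := t.isLt
      omega
    · obtain ⟨u, hu, hus⟩ := hj
      obtain ⟨u', hu', hus'⟩ := hj'
      have huu : u = u' := by
        have e1 : S₁ + (u : ℕ) = (s : ℕ) := by rw [← hus]; simp
        have e2 : S₁ + (u' : ℕ) = (s : ℕ) := by rw [← hus']; simp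
        exact Fin.ext (by omega)
      have := Q1 i ⟨(j : ℕ) - A, by have := j.isLt; omega⟩
        ⟨(j' : ℕ) - A, by have := j'.isLt; omega⟩ u hu (huu ▸ hu')
      have hv : (j : ℕ) - A = (j' : ℕ) - A := congrArg Fin.val this
      exact Fin.ext (by omega)
  · intro i i' j s hi hi'
    by_cases hb : (j : ℕ) < A <;>
      simp only [hb, dite_true, dite_false, Option.map_eq_some_iff] at hi hi'
    · obtain ⟨t, ht, hts⟩ := hi
      obtain ⟨t', ht', hts'⟩ := hi'
      have htt : t = t' := by
        have e1 : (t : ℕ) = (s : ℕ) := by rw [← hts]; simp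
        have e2 : (t' : ℕ) = (s : ℕ) := by rw [← hts']; simp
        exact Fin.ext (by omega)
      exact P2 i i' ⟨j, hb⟩ t ht (htt ▸ ht')
    · obtain ⟨u, hu, hus⟩ := hi
      obtain ⟨u', hu', hus'⟩ := hi'
      have huu : u = u' := by
        have e1 : S₁ + (u : ℕ) = (s : ℕ) := by rw [← hus]; simp
        have e2 : S₁ + (u' : ℕ) = (s : ℕ) := by rw [← hus']; simp
        exact Fin.ext (by omega)
      exact Q2 i i' _ u hu (huu ▸ hu')
  · intro a c b d s hne hab hcd
    by_cases hb : (b : ℕ) < A <;> by_cases hd : (d : ℕ) < A <;>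
      simp only [hb, hd, dite_true, dite_false, Option.map_eq_some_iff] at hab hcd ⊢
    · obtain ⟨t, ht, hts⟩ := hab
      obtain ⟨t', ht', hts'⟩ := hcd
      have htt : t = t' := by
        have e1 : (t : ℕ) = (s : ℕ) := by rw [← hts]; simp
        have e2 : (t' : ℕ) = (s : ℕ) := by rw [← hts']; simp
        exact Fin.ext (by omega)
      have hne' : (a, (⟨(b : ℕ), hb⟩ : Fin A)) ≠ (c, ⟨(d : ℕ), hd⟩) := by
        intro he
        apply hne
        simp only [Prod.mk.injEq, Fin.mk.injEq] at he
        exact Prod.ext he.1 (Fin.ext he.2)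
      have := P3 a c ⟨b, hb⟩ ⟨d, hd⟩ t hne' ht (htt ▸ ht')
      simp [Option.map_eq_none_iff, this.1, this.2]
    · obtain ⟨t, ht, hts⟩ := hab
      obtain ⟨u, hu, hus⟩ := hcd
      have e1 : (t : ℕ) = (s : ℕ) := by rw [← hts]; simp
      have e2 : S₁ + (u : ℕ) = (s : ℕ) := by rw [← hus]; simp
      have := t.isLt
      omega
    · obtain ⟨u, hu, hus⟩ := hab
      obtain ⟨t, ht, hts⟩ := hcd
      have e1 : (t : ℕ) = (s : ℕ) := by rw [← hts]; simp
      have e2 : S₁ + (u : ℕ) = (s : ℕ) := by rw [← hus]; simp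
      have := t.isLt
      omega
    · obtain ⟨u, hu, hus⟩ := hab
      obtain ⟨u', hu', hus'⟩ := hcd
      have huu : u = u' := by
        have e1 : S₁ + (u : ℕ) = (s : ℕ) := by rw [← hus]; simp
        have e2 : S₁ + (u' : ℕ) = (s : ℕ) := by rw [← hus']; simp
        exact Fin.ext (by omega)
      have hne' : (a, (⟨(b : ℕ) - A, by have := b.isLt; omega⟩ : Fin B)) ≠
          (c, ⟨(d : ℕ) - A, by have := d.isLt; omega⟩) := by
        intro he
        injection he with he1 he2
        injection he2 with he2
        apply hne
        rw [Prod.mk.injEq]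
        refine ⟨he1, Fin.ext ?_⟩
        omega
      have := Q3 a c _ _ u hne' hu (huu ▸ hu')
      simp [Option.map_eq_none_iff, this.1, this.2]
  · intro j
    by_cases hb : (j : ℕ) < A <;>
      simp only [hb, dite_true, dite_false, Option.map_eq_none_iff]
    · exact P4 ⟨j, hb⟩
    · exact Q4 _

theorem pda_concatenate (F Z K₁ K₂ S₁ S₂ : ℕ) (hF : 0 < F) (hZ : 0 < Z) (hZF : Z < F)
    (hK₁ : 0 < K₁) (hK₂ : 0 < K₂) (hS₁ : 0 < S₁) (hS₂ : 0 < S₂)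
    (h₁ : PDAExists K₁ F Z S₁) (h₂ : PDAExists K₂ F Z S₂) :
    PDAExists (K₁ + K₂) F Z (S₁ + S₂) ∧
      maxK F Z S₁ + maxK F Z S₂ ≤ maxK F Z (S₁ + S₂) := by
  have hbdd1 : BddAbove {K | PDAExists K F Z S₁} := ⟨F * S₁, fun K hK => pda_bound hZF hK⟩
  have hbdd2 : BddAbove {K | PDAExists K F Z S₂} := ⟨F * S₂, fun K hK => pda_bound hZF hK⟩
  have hbdd3 : BddAbove {K | PDAExists K F Z (S₁ + S₂)} :=
    ⟨F * (S₁ + S₂), fun K hK => pda_bound hZF hK⟩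
  have hm1 := Nat.sSup_mem (s := {K | PDAExists K F Z S₁}) ⟨K₁, h₁⟩ hbdd1
  have hm2 := Nat.sSup_mem (s := {K | PDAExists K F Z S₂}) ⟨K₂, h₂⟩ hbdd2
  refine ⟨pda_concat h₁ h₂, ?_⟩
  simp only [maxK]
  exact le_csSup hbdd3 (pda_concat hm1 hm2)
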